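/- In the same setting, the element H · ∏_{i=0}^{3} ((d-2i)H + i·γ₁) equals d(11d-24)·*. -/
import Mathlib


/-- In the Chow ring of the universal line `Φ` over `Gr(1,P³)`, with relations
`H² = γ₁H - γ₂`, `H⁴ = 0` and intersection numbers `H³γ₁² = *`, `H²γ₁³ = 2*`,
`Hγ₁⁴ = 2*`, one has `H · ∏_{i=0}^{3} ((d-2i)H + iγ₁) = d(11d-24)·*`. -/
theorem flecnodal_curve_degree_chow {R : Type*} [CommRing R]
    (H γ₁ γ₂ star : R)
    (hsq : H ^ 2 = γ₁ * H - γ₂)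
    (h32 : H ^ 3 * γ₁ ^ 2 = star)
    (h23 : H ^ 2 * γ₁ ^ 3 = 2 * star)
    (h14 : H * γ₁ ^ 4 = 2 * star)
    (h4 : H ^ 4 = 0)
    (d : ℤ) :
    H * ∏ i ∈ Finset.range 4, (((d : R) - 2 * (i : ℕ)) * H + (i : ℕ) * γ₁) =
      ((d * (11 * d - 24) : ℤ) : R) * star := by
  simp only [Finset.prod_range_succ, Finset.prod_range_zero, Nat.cast_ofNat,
    Nat.cast_one, Nat.cast_zero, one_mul]
  push_cast
  linear_combination ((d : R) * (11 * d - 36)) * h32 + 6 * (d : R) * h23 +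
    ((d : R) * (d - 2) * (d - 4) * (d - 6) * H +
      (d : R) * (3 * (d - 2) * (d - 4) + 2 * (d - 2) * (d - 6) + (d - 4) * (d - 6)) * γ₁) * h4
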